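/- For every ε > 0 there exist an integer n and a nonempty subset G of the vertex set of the shift graph Sh_n^2 such that α(Sh_n^2[G]) ≤ (1/4 + ε)·|G|. -/

import Mathlib

/-- Two vertices `(i,j)` and `(i',j')` of the shift graph are adjacent
if `j = i'` or `j' = i` (and they are distinct). -/
abbrev shAdj (p q : ℕ × ℕ) : Prop := p ≠ q ∧ (p.2 = q.1 ∨ q.2 = p.1)

/-- The vertex set of the shift graph `Sh_n^2`: all pairs `(i,j)` with `1 ≤ i < j ≤ n`. -/
def shiftVerts (n : ℕ) : Finset (ℕ × ℕ) :=
  (Finset.Icc 1 n ×ˢ Finset.Icc 1 n).filter fun p => p.1 < p.2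

open Classical in
/-- The independence number of the subgraph of the shift graph induced on `G`. -/
noncomputable def indepNum2 (G : Finset (ℕ × ℕ)) : ℕ :=
  (G.powerset.filter fun I => ∀ p ∈ I, ∀ q ∈ I, ¬ shAdj p q).sup Finset.card

/-- `α_n^2`: the minimum of `α(Sh_n^2[G])/|G|` over nonempty `G ⊆ V(Sh_n^2)`. -/
noncomputable def alpha2 (n : ℕ) : ℝ :=
  sInf {r : ℝ | ∃ G : Finset (ℕ × ℕ), G.Nonempty ∧ G ⊆ shiftVerts n ∧
    r = (indepNum2 G : ℝ) / G.card}

open Finset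

/-- index pairs (a,b) with a < b < k -/
def pr (k : ℕ) : Finset (ℕ × ℕ) := (range k ×ˢ range k).filter fun q => q.1 < q.2

/-- the construction -/
def myG (k N : ℕ) : Finset (ℕ × ℕ) :=
  ((Finset.Ioc 0 N) ×ˢ pr k).image fun x => (x.1 + 2 ^ (x.2.1 + 1), x.1 + 2 ^ (x.2.2 + 1))

lemma two_pow_add_ne (a b c d : ℕ) (hab : a < b) (hcd : c < d) (hbd : b < d) :
    2 ^ b + 2 ^ c ≠ 2 ^ d + 2 ^ a := by
  have h1 : 2 ^ b ≤ 2 ^ (d - 1) := Nat.pow_le_pow_right (by norm_num) (by omega)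
  have h2 : 2 ^ c ≤ 2 ^ (d - 1) := Nat.pow_le_pow_right (by norm_num) (by omega)
  have h3 : 2 ^ (d - 1) + 2 ^ (d - 1) = 2 ^ d := by
    rw [← two_mul, ← pow_succ']
    congr 1; omega
  have h4 : 0 < 2 ^ a := Nat.pow_pos (by norm_num)
  omega

lemma myG_injOn (k N : ℕ) :
    Set.InjOn (fun x : ℕ × ℕ × ℕ => (x.1 + 2 ^ (x.2.1 + 1), x.1 + 2 ^ (x.2.2 + 1)))
      (((Finset.Ioc 0 N) ×ˢ pr k : Finset (ℕ × ℕ × ℕ)) : Set (ℕ × ℕ × ℕ)) := by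
  rintro ⟨i, a, b⟩ hx ⟨i', c, d⟩ hy h
  simp only [coe_product, Set.mem_prod, mem_coe, pr, mem_filter, mem_product, mem_range,
    mem_Ioc] at hx hy
  obtain ⟨-, ⟨-, -⟩, hab⟩ := hx
  obtain ⟨-, ⟨-, -⟩, hcd⟩ := hy
  simp only [Prod.mk.injEq] at h
  obtain ⟨h1, h2⟩ := h
  have hab' : a + 1 < b + 1 := by omega
  have hcd' : c + 1 < d + 1 := by omega
  have key : 2 ^ (b+1) + 2 ^ (c+1) = 2 ^ (d+1) + 2 ^ (a+1) := by omega
  have hbd : b = d := by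
    rcases lt_trichotomy b d with hlt | heq | hgt
    · exact absurd key (two_pow_add_ne _ _ _ _ hab' hcd' (by omega))
    · exact heq
    · exact absurd key.symm (two_pow_add_ne _ _ _ _ hcd' hab' (by omega))
  subst hbd
  have hac : 2 ^ (a+1) = 2 ^ (c+1) := by omega
  have hac2 : a + 1 = c + 1 := Nat.pow_right_injective (le_refl 2) hac
  have hac3 : a = c := by omega
  subst hac3
  have hii : i = i' := by omega
  subst hii
  rfl

lemma myG_sum (k N : ℕ) (F : ℕ × ℕ → ℤ) :
    ∑ p ∈ myG k N, F p
      = ∑ i ∈ Finset.Ioc 0 N, ∑ q ∈ pr k, F (i + 2 ^ (q.1 + 1), i + 2 ^ (q.2 + 1)) := by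
  rw [myG, Finset.sum_image (fun x hx y hy h => myG_injOn k N (by simpa using hx) (by simpa using hy) h)]
  rw [Finset.sum_product]

lemma myG_card (k N : ℕ) : (myG k N).card = N * (pr k).card := by
  rw [myG, Finset.card_image_of_injOn (myG_injOn k N), Finset.card_product,
    Nat.card_Ioc]
  simp

lemma myG_subset (k N : ℕ) : myG k N ⊆ shiftVerts (N + 2 ^ k) := by
  intro p hp
  simp only [myG, mem_image] at hp
  obtain ⟨⟨i, a, b⟩, hx, rfl⟩ := hp
  simp only [pr, mem_product, mem_filter, mem_range, mem_Ioc] at hx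
  obtain ⟨⟨hi0, hiN⟩, ⟨ha, hb⟩, hab⟩ := hx
  have h1 : 2 ^ (a+1) < 2 ^ (b+1) := Nat.pow_lt_pow_right (by norm_num) (by omega)
  have h2 : 2 ^ (b+1) ≤ 2 ^ k := Nat.pow_le_pow_right (by norm_num) (by omega)
  have h3 : 0 < 2 ^ (a+1) := Nat.pow_pos (by norm_num)
  simp only [shiftVerts, mem_filter, mem_product, Finset.mem_Icc]
  refine ⟨⟨⟨by omega, by omega⟩, ⟨by omega, by omega⟩⟩, by omega⟩

/-- the ±1 indicator -/
def sg (A : Finset ℕ) (u : ℕ) : ℤ := if u ∈ A then 1 else -1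

lemma sg_le_one (A : Finset ℕ) (u : ℕ) : sg A u ≤ 1 := by
  unfold sg; split <;> norm_num

lemma neg_one_le_sg (A : Finset ℕ) (u : ℕ) : -1 ≤ sg A u := by
  unfold sg; split <;> norm_num

lemma sg_sq (A : Finset ℕ) (u : ℕ) : sg A u * sg A u = 1 := by
  unfold sg; split <;> norm_num

/-- sum of sg over an interval is bounded by its length -/
lemma sg_Ioc_le (A : Finset ℕ) (a b : ℕ) :
    ∑ u ∈ Finset.Ioc a b, sg A u ≤ (b - a : ℕ) := by
  calc ∑ u ∈ Finset.Ioc a b, sg A u ≤ ∑ u ∈ Finset.Ioc a b, 1 :=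
        Finset.sum_le_sum fun u _ => sg_le_one A u
    _ = ((b - a : ℕ) : ℤ) := by rw [Finset.sum_const, Nat.card_Ioc]; simp

lemma sg_Ioc_ge (A : Finset ℕ) (a b : ℕ) :
    -((b - a : ℕ) : ℤ) ≤ ∑ u ∈ Finset.Ioc a b, sg A u := by
  calc -((b - a : ℕ) : ℤ) = ∑ u ∈ Finset.Ioc a b, (-1 : ℤ) := by
        rw [Finset.sum_const, Nat.card_Ioc]; simp
    _ ≤ ∑ u ∈ Finset.Ioc a b, sg A u := Finset.sum_le_sum fun u _ => neg_one_le_sg A u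

lemma sg_shift_sum (A : Finset ℕ) (N c : ℕ) :
    ∑ i ∈ Finset.Ioc 0 N, sg A (i + c) = ∑ u ∈ Finset.Ioc c (N + c), sg A u := by
  have h : Finset.Ioc c (N + c) = (Finset.Ioc 0 N).image (· + c) := by
    rw [Finset.image_add_right_Ioc]; congr 1; omega
  rw [h, Finset.sum_image (fun x _ y _ h => by omega)]

/-- bound on the linear term, per index pair -/
lemma linear_bound (A : Finset ℕ) (N B C : ℕ) (hBC : B ≤ C) (hC : C ≤ N) :
    ∑ i ∈ Finset.Ioc 0 N, (sg A (i + B) - sg A (i + C)) ≤ 2 * (C : ℤ) := by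
  rw [Finset.sum_sub_distrib, sg_shift_sum, sg_shift_sum]
  have h1 : ∑ u ∈ Finset.Ioc B (N + B), sg A u
      = ∑ u ∈ Finset.Ioc B C, sg A u + ∑ u ∈ Finset.Ioc C (N + B), sg A u :=
    (Finset.sum_Ioc_consecutive _ hBC (by omega)).symm
  have h2 : ∑ u ∈ Finset.Ioc C (N + C), sg A u
      = ∑ u ∈ Finset.Ioc C (N + B), sg A u + ∑ u ∈ Finset.Ioc (N + B) (N + C), sg A u :=
    (Finset.sum_Ioc_consecutive _ (by omega) (by omega)).symm
  have h3 := sg_Ioc_le A B C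
  have h4 := sg_Ioc_ge A (N + B) (N + C)
  have h5 : (C - B : ℕ) = ((N + C) - (N + B) : ℕ) := by omega
  omega

/-- square expansion: for any g, (∑ g)² = ∑ g² + 2 ∑_{a<b} g a * g b -/
lemma sq_expand (k : ℕ) (g : ℕ → ℤ) :
    (∑ j ∈ range k, g j) * (∑ j ∈ range k, g j)
      = (∑ j ∈ range k, g j * g j) + 2 * ∑ q ∈ pr k, g q.1 * g q.2 := by
  induction k with
  | zero => simp [pr]
  | succ n ih =>
    have hpr : pr (n + 1) = pr n ∪ (range n).image (fun j => (j, n)) := by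
      ext ⟨a, b⟩
      simp only [pr, mem_filter, mem_product, mem_range, mem_union, mem_image]
      constructor
      · rintro ⟨⟨ha, hb⟩, hab⟩
        rcases Nat.lt_or_ge b n with h | h
        · exact Or.inl ⟨⟨by omega, h⟩, hab⟩
        · right; exact ⟨a, by omega, by simp; omega⟩
      · rintro (⟨⟨ha, hb⟩, hab⟩ | ⟨j, hj, h⟩)
        · exact ⟨⟨by omega, by omega⟩, hab⟩
        · simp only [Prod.mk.injEq] at h
          obtain ⟨rfl, rfl⟩ := h
          exact ⟨⟨by omega, by omega⟩, hj⟩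
    have hdisj : Disjoint (pr n) ((range n).image (fun j => (j, n))) := by
      rw [Finset.disjoint_right]
      rintro ⟨a, b⟩ hmem hpr
      simp only [mem_image, mem_range, Prod.mk.injEq] at hmem
      obtain ⟨j, hj, rfl, rfl⟩ := hmem
      simp only [pr, mem_filter, mem_product, mem_range] at hpr
      omega
    rw [Finset.sum_range_succ, Finset.sum_range_succ (fun j => g j * g j), hpr,
      Finset.sum_union hdisj, Finset.sum_image (fun x _ y _ h => by simpa using h)]
    simp only
    rw [← Finset.sum_mul]
    linear_combination ih

/-- per-i bound on the quadratic term -/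
lemma quad_bound (A : Finset ℕ) (k : ℕ) (i : ℕ) :
    -(k : ℤ) ≤ 2 * ∑ q ∈ pr k, sg A (i + 2 ^ (q.1 + 1)) * sg A (i + 2 ^ (q.2 + 1)) := by
  have h := sq_expand k (fun j => sg A (i + 2 ^ (j + 1)))
  have hsq : ∑ j ∈ range k, (fun j => sg A (i + 2 ^ (j + 1))) j * (fun j => sg A (i + 2 ^ (j+1))) j
      = (k : ℤ) := by
    simp only [sg_sq]
    simp
  rw [hsq] at h
  nlinarith [mul_self_nonneg (∑ j ∈ range k, sg A (i + 2 ^ (j + 1)))]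

lemma pr_succ (n : ℕ) : pr (n + 1) = pr n ∪ (range n).image (fun j => (j, n)) := by
  ext ⟨a, b⟩
  simp only [pr, mem_filter, mem_product, mem_range, mem_union, mem_image]
  constructor
  · rintro ⟨⟨ha, hb⟩, hab⟩
    rcases Nat.lt_or_ge b n with h | h
    · exact Or.inl ⟨⟨by omega, h⟩, hab⟩
    · right; exact ⟨a, by omega, by simp; omega⟩
  · rintro (⟨⟨ha, hb⟩, hab⟩ | ⟨j, hj, h⟩)
    · exact ⟨⟨by omega, by omega⟩, hab⟩
    · simp only [Prod.mk.injEq] at h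
      obtain ⟨rfl, rfl⟩ := h
      exact ⟨⟨by omega, by omega⟩, hj⟩

lemma pr_disj (n : ℕ) : Disjoint (pr n) ((range n).image (fun j => (j, n))) := by
  rw [Finset.disjoint_right]
  rintro ⟨a, b⟩ hmem hpr
  simp only [mem_image, mem_range, Prod.mk.injEq] at hmem
  obtain ⟨j, hj, rfl, rfl⟩ := hmem
  simp only [pr, mem_filter, mem_product, mem_range] at hpr
  omega

lemma pr_card (k : ℕ) : 2 * (pr k).card = k * (k - 1) := by
  induction k with
  | zero => simp [pr]
  | succ n ih =>
    rw [pr_succ, Finset.card_union_of_disjoint (pr_disj n),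
      Finset.card_image_of_injective _ (fun x y h => by simpa using h), Finset.card_range]
    rcases n with _ | m
    · simp [pr]
    · have h : (m + 1 + 1) * (m + 1 + 1 - 1) = (m + 1) * (m + 1 - 1) + 2 * (m + 1) := by
        simp only [Nat.add_sub_cancel]
        ring
      omega

lemma main_bound (k N : ℕ) (hMN : 2 ^ k ≤ N) (A : Finset ℕ) :
    8 * ((((myG k N).filter fun p => p.1 ∈ A ∧ p.2 ∉ A).card : ℤ))
      ≤ 2 * N * (pr k).card + 4 * 2 ^ k * (pr k).card + N * k := by
  classical
  have hc : (4 : ℤ) * (((myG k N).filter fun p => p.1 ∈ A ∧ p.2 ∉ A).card : ℤ)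
      = ∑ p ∈ myG k N, (1 + sg A p.1) * (1 - sg A p.2) := by
    have h1 : ∀ p ∈ myG k N, (1 + sg A p.1) * (1 - sg A p.2)
        = if p.1 ∈ A ∧ p.2 ∉ A then (4 : ℤ) else 0 := by
      intro p _
      unfold sg
      by_cases h1 : p.1 ∈ A <;> by_cases h2 : p.2 ∈ A <;> simp [h1, h2]
    rw [Finset.sum_congr rfl h1, ← Finset.sum_filter, Finset.sum_const]
    push_cast
    ring
  rw [myG_sum] at hc
  simp only at hc
  have hsplit : ∑ i ∈ Finset.Ioc 0 N, ∑ q ∈ pr k,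
        (1 + sg A (i + 2 ^ (q.1 + 1))) * (1 - sg A (i + 2 ^ (q.2 + 1)))
      = (∑ i ∈ Finset.Ioc 0 N, ∑ q ∈ pr k, (1 : ℤ))
        + (∑ i ∈ Finset.Ioc 0 N, ∑ q ∈ pr k,
            (sg A (i + 2 ^ (q.1 + 1)) - sg A (i + 2 ^ (q.2 + 1))))
        - (∑ i ∈ Finset.Ioc 0 N, ∑ q ∈ pr k,
            sg A (i + 2 ^ (q.1 + 1)) * sg A (i + 2 ^ (q.2 + 1))) := by
    rw [← Finset.sum_add_distrib, ← Finset.sum_sub_distrib]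
    refine Finset.sum_congr rfl fun i _ => ?_
    rw [← Finset.sum_add_distrib, ← Finset.sum_sub_distrib]
    exact Finset.sum_congr rfl fun q _ => by ring
  have h1 : ∑ i ∈ Finset.Ioc 0 N, ∑ q ∈ pr k, (1 : ℤ) = (N : ℤ) * (pr k).card := by
    simp [Finset.sum_const, Nat.card_Ioc, mul_comm]
  have h2 : ∑ i ∈ Finset.Ioc 0 N, ∑ q ∈ pr k,
        (sg A (i + 2 ^ (q.1 + 1)) - sg A (i + 2 ^ (q.2 + 1)))
      ≤ ((pr k).card : ℤ) * (2 * 2 ^ k) := by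
    rw [Finset.sum_comm]
    have hq : ∀ q ∈ pr k, ∑ i ∈ Finset.Ioc 0 N,
        (sg A (i + 2 ^ (q.1 + 1)) - sg A (i + 2 ^ (q.2 + 1))) ≤ (2 * 2 ^ k : ℤ) := by
      rintro ⟨a, b⟩ hq
      simp only [pr, mem_filter, mem_product, mem_range] at hq
      obtain ⟨⟨ha, hb⟩, hab⟩ := hq
      have hBC : 2 ^ (a + 1) ≤ 2 ^ (b + 1) := Nat.pow_le_pow_right (by norm_num) (by omega)
      have hCk : 2 ^ (b + 1) ≤ 2 ^ k := Nat.pow_le_pow_right (by norm_num) (by omega)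
      calc ∑ i ∈ Finset.Ioc 0 N, (sg A (i + 2 ^ (a + 1)) - sg A (i + 2 ^ (b + 1)))
          ≤ 2 * ((2 ^ (b + 1) : ℕ) : ℤ) :=
            linear_bound A N _ _ hBC (le_trans hCk hMN)
        _ ≤ (2 * 2 ^ k : ℤ) := by
            have h' : ((2 ^ (b + 1) : ℕ) : ℤ) ≤ ((2 ^ k : ℕ) : ℤ) := Int.ofNat_le.mpr hCk
            push_cast at h' ⊢
            linarith
    calc ∑ q ∈ pr k, ∑ i ∈ Finset.Ioc 0 N,
          (sg A (i + 2 ^ (q.1 + 1)) - sg A (i + 2 ^ (q.2 + 1)))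
        ≤ ∑ q ∈ pr k, (2 * 2 ^ k : ℤ) := Finset.sum_le_sum hq
      _ = ((pr k).card : ℤ) * (2 * 2 ^ k) := by rw [Finset.sum_const]; push_cast; ring
  have h3 : -((N : ℤ) * k) ≤ 2 * ∑ i ∈ Finset.Ioc 0 N, ∑ q ∈ pr k,
        sg A (i + 2 ^ (q.1 + 1)) * sg A (i + 2 ^ (q.2 + 1)) := by
    rw [Finset.mul_sum]
    calc -((N : ℤ) * k) = ∑ i ∈ Finset.Ioc 0 N, -(k : ℤ) := by
          rw [Finset.sum_const, Nat.card_Ioc, Nat.sub_zero]; push_cast; ring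
      _ ≤ _ := Finset.sum_le_sum fun i _ => quad_bound A k i
  have hcast : ((2 ^ k : ℕ) : ℤ) = 2 ^ k := by push_cast; ring
  rw [hsplit, h1] at hc
  push_cast
  push_cast at hc h2 h3
  linarith


/-- For every `ε > 0` there are `n` and a nonempty `G ⊆ V(Sh_n^2)` with
`α(Sh_n^2[G]) ≤ (1/4 + ε)·|G|`. -/
theorem exists_indepNum2_le (ε : ℝ) (hε : 0 < ε) :
    ∃ (n : ℕ) (G : Finset (ℕ × ℕ)), G ⊆ shiftVerts n ∧ G.Nonempty ∧
      (indepNum2 G : ℝ) ≤ (1/4 + ε) * G.card := by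
  classical
  set k : ℕ := 2 + ⌈1 / (2 * ε)⌉₊ with hk_def
  set M : ℕ := 2 ^ k with hM_def
  set N : ℕ := M * (⌈1 / ε⌉₊ + 1) with hN_def
  have hk2 : 2 ≤ k := by omega
  have hMpos : 0 < M := Nat.pow_pos (by norm_num)
  have hMN : M ≤ N := by
    have : 1 ≤ ⌈1 / ε⌉₊ + 1 := by omega
    calc M = M * 1 := by ring
      _ ≤ N := Nat.mul_le_mul_left _ this
  set P : ℕ := (pr k).card with hP_def
  have hPpos : 0 < P := by
    rw [hP_def]
    apply Finset.card_pos.mpr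
    exact ⟨(0, 1), by simp [pr]; omega⟩
  have hNpos : 0 < N := lt_of_lt_of_le hMpos hMN
  refine ⟨N + M, myG k N, myG_subset k N, ?_, ?_⟩
  · apply Finset.card_pos.mp
    rw [myG_card]
    exact Nat.mul_pos hNpos hPpos
  -- the independence bound
  have hsup : ∀ I : Finset (ℕ × ℕ), I ⊆ myG k N → (∀ p ∈ I, ∀ q ∈ I, ¬ shAdj p q) →
      I.card * 8 ≤ 2 * N * P + 4 * M * P + N * k := by
    intro I hIG hind
    set A : Finset ℕ := I.image Prod.fst with hA_def
    have hsub : I ⊆ (myG k N).filter fun p => p.1 ∈ A ∧ p.2 ∉ A := by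
      intro p hp
      rw [Finset.mem_filter]
      refine ⟨hIG hp, Finset.mem_image_of_mem _ hp, ?_⟩
      intro hmem
      rw [hA_def, Finset.mem_image] at hmem
      obtain ⟨q, hq, hq1⟩ := hmem
      by_cases hpq : p = q
      · have hsv := myG_subset k N (hIG hp)
        simp only [shiftVerts, mem_filter] at hsv
        rw [← hpq] at hq1
        have h12 := hsv.2
        omega
      · exact hind p hp q hq ⟨hpq, Or.inl hq1.symm⟩
    have hcard : I.card ≤ ((myG k N).filter fun p => p.1 ∈ A ∧ p.2 ∉ A).card :=
      Finset.card_le_card hsub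
    have hmb := main_bound k N (by rw [hN_def] at hMN ⊢; exact hMN) A
    have : I.card * 8 ≤ 2 * N * ((pr k).card) + 4 * 2 ^ k * ((pr k).card) + N * k := by
      have h8 : 8 * (I.card : ℤ) ≤ 2 * N * ((pr k).card) + 4 * 2 ^ k * ((pr k).card) + N * k := by
        have hcc : (I.card : ℤ) ≤ (((myG k N).filter fun p => p.1 ∈ A ∧ p.2 ∉ A).card : ℤ) :=
          Nat.cast_le.mpr hcard
        linarith
      exact_mod_cast by linarith [h8]
    simpa [hM_def, hP_def] using this
  have hnat : indepNum2 (myG k N) * 8 ≤ 2 * N * P + 4 * M * P + N * k := by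
    rw [← Nat.le_div_iff_mul_le (by norm_num : 0 < 8)]
    apply Finset.sup_le
    intro I hI
    rw [Nat.le_div_iff_mul_le (by norm_num : 0 < 8)]
    simp only [Finset.mem_filter, Finset.mem_powerset] at hI
    exact hsup I hI.1 hI.2
  -- real arithmetic
  rw [myG_card]
  have hMε : (M : ℝ) ≤ ε * N := by
    have h1 : (1 : ℝ) / ε ≤ ⌈1 / ε⌉₊ := Nat.le_ceil _
    have hNR : (N : ℝ) = M * ((⌈1 / ε⌉₊ : ℝ) + 1) := by rw [hN_def]; push_cast; ring
    have hM0 : (0 : ℝ) < M := by exact_mod_cast hMpos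
    have hinv : ε * (1 / ε) = 1 := by field_simp
    have h2 : 1 ≤ ε * (⌈1 / ε⌉₊ : ℝ) := by
      calc (1:ℝ) = ε * (1 / ε) := hinv.symm
        _ ≤ ε * (⌈1 / ε⌉₊ : ℝ) := mul_le_mul_of_nonneg_left h1 hε.le
    have h3 : (M:ℝ) * 1 ≤ (M:ℝ) * (ε * (⌈1 / ε⌉₊ : ℝ)) :=
      mul_le_mul_of_nonneg_left h2 hM0.le
    have h4 : (0:ℝ) ≤ ε * M := by positivity
    calc (M:ℝ) = M * 1 := by ring
      _ ≤ (M:ℝ) * (ε * (⌈1 / ε⌉₊ : ℝ)) := h3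
      _ ≤ ε * N := by
          have hre : ε * ((M:ℝ) * ((⌈1 / ε⌉₊ : ℝ) + 1))
              = (M:ℝ) * (ε * (⌈1 / ε⌉₊ : ℝ)) + ε * M := by ring
          rw [hNR, hre]
          linarith [h4]
  have h2P : (2 * P : ℝ) = (k : ℝ) * ((k : ℝ) - 1) := by
    have h := pr_card k
    have hk1 : ((k - 1 : ℕ) : ℝ) = (k : ℝ) - 1 := by
      have hh : 1 ≤ k := by omega
      push_cast [Nat.cast_sub hh]
      ring
    have : ((2 * P : ℕ) : ℝ) = ((k * (k - 1) : ℕ) : ℝ) := by exact_mod_cast h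
    push_cast at this
    rw [hk1] at this
    push_cast
    linarith
  have hkε : (N : ℝ) * k ≤ 4 * ε * N * P := by
    have hceil : 1 / (2 * ε) ≤ (⌈1 / (2 * ε)⌉₊ : ℝ) := Nat.le_ceil _
    have hkR : (k : ℝ) = 2 + (⌈1 / (2 * ε)⌉₊ : ℝ) := by rw [hk_def]; push_cast; ring
    have h2ε : (0:ℝ) < 2 * ε := by linarith
    have hinv : 1 / (2 * ε) * (2 * ε) = 1 := by field_simp
    have hεk : 1 ≤ 2 * ε * ((k : ℝ) - 1) := by
      have hmul : 1 / (2 * ε) * (2 * ε) ≤ (⌈1 / (2 * ε)⌉₊ : ℝ) * (2 * ε) :=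
        mul_le_mul_of_nonneg_right hceil h2ε.le
      rw [hinv] at hmul
      have : (k : ℝ) - 1 = 1 + (⌈1 / (2 * ε)⌉₊ : ℝ) := by rw [hkR]; ring
      rw [this]
      nlinarith
    have hN0 : (0:ℝ) ≤ N := Nat.cast_nonneg _
    have hk0 : (2:ℝ) ≤ k := by exact_mod_cast hk2
    have hNk0 : (0:ℝ) ≤ (N:ℝ) * k := by positivity
    have e1 : (N:ℝ) * k * 1 ≤ (N:ℝ) * k * (2 * ε * ((k : ℝ) - 1)) :=
      mul_le_mul_of_nonneg_left hεk hNk0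
    have e2 : (N:ℝ) * k * (2 * ε * ((k : ℝ) - 1)) = 2 * ε * N * ((k:ℝ) * ((k:ℝ) - 1)) := by
      ring
    rw [e2, ← h2P] at e1
    linarith
  have h8 : (indepNum2 (myG k N) : ℝ) * 8 ≤ 2 * N * P + 4 * M * P + N * k := by
    exact_mod_cast hnat
  have hP0 : (0:ℝ) ≤ P := Nat.cast_nonneg _
  have hN0 : (0:ℝ) ≤ N := Nat.cast_nonneg _
  have h4MP : 4 * (M:ℝ) * P ≤ 4 * (ε * N) * P := by nlinarith
  push_cast
  nlinarith
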